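/- Let G be a connected accessible graph, let B be a block of G, and let V = {v₁,…,v_k} be the set of cut vertices of G belonging to V(B). Then for every subset W ⊆ V, the graph B̄^W is accessible. In particular, B̄ = B̄^V is accessible. -/

import Mathlib

open SimpleGraph

universe u u'

/-- The number of connected components of the induced subgraph of `G` on the vertex set `A`. -/
noncomputable def cComp {V : Type u} (G : SimpleGraph V) (A : Set V) : ℕ :=
  Nat.card (G.induce A).ConnectedComponent

/-- `x` is a cut vertex of the induced subgraph of `G` on `A`: removing `x`
increases the number of connected components. -/
def CutVertexOn {V : Type u} (G : SimpleGraph V) (A : Set V) (x : V) : Prop :=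
  x ∈ A ∧ cComp G A < cComp G (A \ {x})

/-- `T` is a cutset of the induced subgraph of `G` on `A`: every `t ∈ T` is a
cut vertex of `G[A] ∖ (T ∖ {t})`. -/
def CutsetOn {V : Type u} [DecidableEq V] (G : SimpleGraph V) (A : Set V) (T : Finset V) :
    Prop :=
  ↑T ⊆ A ∧ ∀ t ∈ T, CutVertexOn G (A \ ↑(T.erase t)) t

/-- The binomial edge ideal of the induced subgraph of `G` on `A` is unmixed
(combinatorial characterization): `c(T) = |T| + c(∅)` for every cutset `T`. -/
def UnmixedOn {V : Type u} [DecidableEq V] (G : SimpleGraph V) (A : Set V) : Prop :=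
  ∀ T : Finset V, CutsetOn G A T → cComp G (A \ ↑T) = T.card + cComp G A

/-- The induced subgraph of `G` on `A` is accessible. -/
def AccessibleOn {V : Type u} [DecidableEq V] (G : SimpleGraph V) (A : Set V) : Prop :=
  UnmixedOn G A ∧
    ∀ T : Finset V, CutsetOn G A T → T.Nonempty → ∃ t ∈ T, CutsetOn G A (T.erase t)

/-- The graph `(G[A])_x`: add all edges between neighbours of `x` lying in `A`. -/
def cliqueAtOn {V : Type u} (G : SimpleGraph V) (A : Set V) (x : V) : SimpleGraph V :=
  G ⊔ SimpleGraph.fromRel (fun a b => a ∈ A ∧ b ∈ A ∧ G.Adj x a ∧ G.Adj x b)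

/-- The binomial edge ideal of the induced subgraph of `G` on `A` is strongly unmixed. -/
inductive StronglyUnmixedOn {V : Type u} [DecidableEq V] : SimpleGraph V → Set V → Prop
  | complete (G : SimpleGraph V) (A : Set V)
      (h : ∀ a b : A, (G.induce A).Reachable a b → a ≠ b → (G.induce A).Adj a b) :
      StronglyUnmixedOn G A
  | cut (G : SimpleGraph V) (A : Set V) (hU : UnmixedOn G A) (x : V)
      (hx : CutVertexOn G A x)
      (h1 : StronglyUnmixedOn G (A \ {x}))
      (h2 : StronglyUnmixedOn (cliqueAtOn G A x) A)
      (h3 : StronglyUnmixedOn (cliqueAtOn G A x) (A \ {x})) :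
      StronglyUnmixedOn G A

/-- `x` is a free vertex of `G`: the induced subgraph on `N(x) ∪ {x}` is complete. -/
def FreeVertex {V : Type u} (G : SimpleGraph V) (x : V) : Prop :=
  ∀ a b : V, G.Adj x a → G.Adj x b → a ≠ b → G.Adj a b

/-- Attach a whisker (pendant vertex) at each vertex of `Wv`.  `Sum.inl a` is the
original vertex `a` and `Sum.inr x` is the whisker vertex `f_x` attached at `x ∈ Wv`. -/
def whiskered {V : Type u} (G : SimpleGraph V) (Wv : Set V) : SimpleGraph (V ⊕ V) :=
  SimpleGraph.fromRel (fun a b =>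
    (∃ x y, G.Adj x y ∧ a = Sum.inl x ∧ b = Sum.inl y) ∨
    (∃ x ∈ Wv, a = Sum.inl x ∧ b = Sum.inr x))

/-- `B` is (the vertex set of) a block of `G`: a maximal connected induced
subgraph having no cut vertex. -/
def IsBlock {V : Type u} (G : SimpleGraph V) (B : Set V) : Prop :=
  (G.induce B).Connected ∧ (∀ x, ¬ CutVertexOn G B x) ∧
    ∀ B' : Set V, B ⊆ B' → (G.induce B').Connected → (∀ x, ¬ CutVertexOn G B' x) → B' = B

/-- Glue two graphs `G` and `H`, identifying the vertex `x` of `G` with the vertex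
`y` of `H` (the identified vertex is `Sum.inl x`). -/
def glueAt {V : Type u} {W : Type u'} (G : SimpleGraph V) (H : SimpleGraph W) (x : V) (y : W) :
    SimpleGraph (V ⊕ W) :=
  SimpleGraph.fromRel (fun a b =>
    (∃ p q, G.Adj p q ∧ a = Sum.inl p ∧ b = Sum.inl q) ∨
    (∃ p q, H.Adj p q ∧ p ≠ y ∧ q ≠ y ∧ a = Sum.inr p ∧ b = Sum.inr q) ∨
    (∃ q, H.Adj y q ∧ a = Sum.inl x ∧ b = Sum.inr q))

/-- The star product `K_m ⋆_r K_n`: two complete graphs, on `{x₁,…,x_m}` (the `inl`s)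
and `{y₁,…,y_n}` (the `inr`s), together with the matching edges `{x_i, y_i}` for `1 ≤ i ≤ r`
(indices `0,…,r-1` here). -/
def starProd (m n r : ℕ) : SimpleGraph (Fin m ⊕ Fin n) :=
  SimpleGraph.fromRel (fun a b =>
    (∃ x y : Fin m, a = Sum.inl x ∧ b = Sum.inl y) ∨
    (∃ x y : Fin n, a = Sum.inr x ∧ b = Sum.inr y) ∨
    (∃ (x : Fin m) (y : Fin n), (x : ℕ) = (y : ℕ) ∧ (x : ℕ) < r ∧
      a = Sum.inl x ∧ b = Sum.inr y))

/-- The vertices `x_i, y_i` for `2 ≤ i ≤ r` (indices `1,…,r-1` here), at which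
whiskers are attached to form `overline(K_m ⋆_r K_n)`. -/
def starWhisk (m n r : ℕ) : Set (Fin m ⊕ Fin n) :=
  {a | (∃ x : Fin m, a = Sum.inl x ∧ 1 ≤ (x : ℕ) ∧ (x : ℕ) < r) ∨
       (∃ y : Fin n, a = Sum.inr y ∧ 1 ≤ (y : ℕ) ∧ (y : ℕ) < r)}

/-- `a` and `b` both lie in `A` and are joined by a path of the induced subgraph of `G` on `A`. -/
def ReachIn {V : Type u} (G : SimpleGraph V) (A : Set V) (a b : V) : Prop :=
  ∃ (ha : a ∈ A) (hb : b ∈ A), (G.induce A).Reachable ⟨a, ha⟩ ⟨b, hb⟩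

/-- Auxiliary (connected case): `G[A]` has no cut vertex, or for every cut vertex `x`,
every connected component of `G[A] ∖ {x}` contains at most `r` cut vertices of `G[A] ∖ {x}`. -/
def RCutConnAux {V : Type u} (G : SimpleGraph V) (A : Set V) (r : ℕ) : Prop :=
  (∀ x, ¬ CutVertexOn G A x) ∨
    ∀ x, CutVertexOn G A x → ∀ a ∈ A \ {x},
      Set.ncard {w | CutVertexOn G (A \ {x}) w ∧ ReachIn G (A \ {x}) a w} ≤ r

/-- `G[A]` is `r`-cut-connected: every connected component of `G[A]` satisfies the
condition of `RCutConnAux`. -/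
def RCutConn {V : Type u} (G : SimpleGraph V) (A : Set V) (r : ℕ) : Prop :=
  ∀ a ∈ A, RCutConnAux G {b | ReachIn G A a b} r

/-- `G[A]` is strongly `r`-cut-connected: it is `r`-cut-connected and, recursively,
`G[A] ∖ {x}` is strongly `r`-cut-connected for every cut vertex `x`. -/
inductive StronglyRCutConn {V : Type u} (r : ℕ) : SimpleGraph V → Set V → Prop
  | mk (G : SimpleGraph V) (A : Set V) (h1 : RCutConn G A r)
      (h2 : ∀ x, CutVertexOn G A x → StronglyRCutConn r G (A \ {x})) :
      StronglyRCutConn r G A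



private lemma reach_map {V U : Type*} {G : SimpleGraph V} {H : SimpleGraph U}
    (f : V → U) (hf : ∀ a b, G.Adj a b → H.Reachable (f a) (f b)) :
    ∀ {a b : V}, G.Reachable a b → H.Reachable (f a) (f b) := by
  intro a b h
  obtain ⟨p⟩ := h
  induction p with
  | nil => exact Reachable.refl _
  | cons h p ih => exact (hf _ _ h).trans ih

private lemma card_cc_eq {V U : Type*} {G : SimpleGraph V} {H : SimpleGraph U}
    (f : V → U) (g : U → V)
    (hf : ∀ a b, G.Adj a b → H.Reachable (f a) (f b))
    (hg : ∀ a b, H.Adj a b → G.Reachable (g a) (g b))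
    (hgf : ∀ v, G.Reachable (g (f v)) v)
    (hfg : ∀ u, H.Reachable (f (g u)) u) :
    Nat.card G.ConnectedComponent = Nat.card H.ConnectedComponent := by
  apply Nat.card_congr
  refine ⟨ConnectedComponent.lift (fun v => H.connectedComponentMk (f v)) ?_,
          ConnectedComponent.lift (fun u => G.connectedComponentMk (g u)) ?_, ?_, ?_⟩
  · intro v w p _; exact ConnectedComponent.eq.mpr (reach_map f hf p.reachable)
  · intro v w p _; exact ConnectedComponent.eq.mpr (reach_map g hg p.reachable)
  · intro c
    induction c using ConnectedComponent.ind with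
    | _ v => simpa using ConnectedComponent.eq.mpr (hgf v)
  · intro c
    induction c using ConnectedComponent.ind with
    | _ u => simpa using ConnectedComponent.eq.mpr (hfg u)

private lemma card_cc_le {V U : Type*} {G : SimpleGraph V} {H : SimpleGraph U} [Finite U]
    (f : V → U)
    (hf : ∀ a b, G.Adj a b → H.Reachable (f a) (f b))
    (hrev : ∀ a b, H.Reachable (f a) (f b) → G.Reachable a b) :
    Nat.card G.ConnectedComponent ≤ Nat.card H.ConnectedComponent := by
  haveI : Finite H.ConnectedComponent := Quot.finite _
  apply Nat.card_le_card_of_injective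
    (ConnectedComponent.lift (fun v => H.connectedComponentMk (f v))
      (fun v w p _ => ConnectedComponent.eq.mpr (reach_map f hf p.reachable)))
  intro c c'
  induction c using ConnectedComponent.ind with
  | _ v =>
    induction c' using ConnectedComponent.ind with
    | _ w =>
      intro h
      simp only [ConnectedComponent.lift_mk] at h
      exact ConnectedComponent.eq.mpr (hrev _ _ (ConnectedComponent.eq.mp h))

private lemma reach_mono {V : Type*} {G : SimpleGraph V} {X Y : Set V} (hXY : X ⊆ Y)
    {a b : V} (ha : a ∈ X) (hb : b ∈ X)
    (h : (G.induce X).Reachable ⟨a, ha⟩ ⟨b, hb⟩) :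
    (G.induce Y).Reachable ⟨a, hXY ha⟩ ⟨b, hXY hb⟩ :=
  @reach_map ↥X ↥Y (G.induce X) (G.induce Y)
    (fun v => ⟨v.1, hXY v.2⟩) (fun _ _ h => Adj.reachable h) _ _ h

private lemma walk_avoid {V : Type*} {G : SimpleGraph V} {X : Set V} {x x₀ : V}
    (hx : ∀ y ∈ X, G.Adj x y → y = x₀) :
    ∀ (n : ℕ) (a b : V) (ha : a ∈ X) (hb : b ∈ X)
      (p : (G.induce X).Walk ⟨a, ha⟩ ⟨b, hb⟩), p.length ≤ n →
      ∀ (hax : a ≠ x) (hbx : b ≠ x),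
      (G.induce (X \ {x})).Reachable ⟨a, ha, hax⟩ ⟨b, hb, hbx⟩ := by
  intro n
  induction n with
  | zero =>
    intro a b ha hb p hlen hax hbx
    cases p with
    | nil => exact Reachable.refl _
    | cons h q => simp at hlen
  | succ n ih =>
    intro a b ha hb p hlen hax hbx
    cases p with
    | nil => exact Reachable.refl _
    | @cons _ c _ h q =>
      obtain ⟨c, hc⟩ := c
      by_cases hcx : c = x
      · subst hcx
        -- a is adjacent to x=c, so a = x₀
        have hGac : G.Adj a c := h
        have hax0 : a = x₀ := hx a ha hGac.symm
        cases q with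
        | nil => exact absurd rfl hbx
        | @cons _ d _ h' q' =>
          obtain ⟨d, hd⟩ := d
          have hdx0 : d = x₀ := hx d hd h'
          have hda : d = a := hdx0.trans hax0.symm
          have hdxne : d ≠ c := by rw [hda]; exact hax
          have hr := ih d b hd hb q'
            (by simp only [Walk.length_cons] at hlen; omega) hdxne hbx
          have : (⟨d, hd, hdxne⟩ : ↥(X \ {c})) = ⟨a, ha, hax⟩ :=
            Subtype.ext hda
          rwa [this] at hr
      · have hr := ih c b hc hb q (by simp only [Walk.length_cons] at hlen; omega) hcx hbx
        have hadj : (G.induce (X \ {x})).Adj ⟨a, ha, hax⟩ ⟨c, hc, hcx⟩ := h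
        exact (hadj.reachable).trans hr

private lemma exists_crossing {V : Type*} {G : SimpleGraph V} {P : Set V} :
    ∀ {a b : V} (_ : G.Walk a b), a ∈ P → b ∉ P → ∃ c d, c ∈ P ∧ d ∉ P ∧ G.Adj c d := by
  intro a b p
  induction p with
  | nil => intro h h'; exact absurd h h'
  | @cons u c _ h q ih =>
    intro hu hb
    by_cases hc : c ∈ P
    · exact ih hc hb
    · exact ⟨u, c, hu, hc, h⟩


private lemma cComp_del_pendant_le {V : Type*} [Finite V] (G : SimpleGraph V)
    (X : Set V) (x x₀ : V) (hx : ∀ y ∈ X, G.Adj x y → y = x₀) :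
    cComp G (X \ {x}) ≤ cComp G X := by
  refine card_cc_le (G := G.induce (X \ {x})) (H := G.induce X)
    (fun v => ⟨v.1, v.2.1⟩) (fun a b h => Adj.reachable h) ?_
  rintro ⟨a, ha, hax⟩ ⟨b, hb, hbx⟩ hr
  obtain ⟨p⟩ := hr
  have := walk_avoid hx p.length a b ha hb p le_rfl hax hbx
  have e1 : (⟨a, ha, hax⟩ : ↥(X \ {x})) = ⟨a, ha, hax⟩ := rfl
  exact this

private lemma diff_erase_diff {α : Type*} [DecidableEq α] (A : Set α) (S : Finset α)
    (v : α) (hv : v ∈ S) : (A \ ↑(S.erase v)) \ {v} = A \ ↑S := by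
  rw [Set.diff_diff, Finset.coe_erase, Set.diff_union_of_subset (by simpa using hv)]

private lemma diff_erase_diff_img {α β : Type*} [DecidableEq α] (f : α → β) (A : Set β)
    (S : Finset α) (v : α) (hv : v ∈ S) :
    (A \ f '' ↑(S.erase v)) \ {f v} = A \ f '' ↑S := by
  rw [Set.diff_diff, ← Set.image_singleton, ← Set.image_union, Finset.coe_erase,
    Set.diff_union_of_subset (by simpa using hv)]

private lemma wadj_inl {V : Type*} (G : SimpleGraph V) (Wv : Set V) (a b : V) :
    (whiskered G Wv).Adj (Sum.inl a) (Sum.inl b) ↔ G.Adj a b := by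
  simp only [whiskered, fromRel_adj]
  constructor
  · rintro ⟨hne, (⟨x, y, hxy, h1, h2⟩ | ⟨x, hx, h1, h2⟩) | (⟨x, y, hxy, h1, h2⟩ | ⟨x, hx, h1, h2⟩)⟩ <;>
      simp_all [SimpleGraph.adj_comm]
  · intro h
    exact ⟨by simpa using h.ne, Or.inl (Or.inl ⟨a, b, h, rfl, rfl⟩)⟩

private lemma wadj_mix {V : Type*} (G : SimpleGraph V) (Wv : Set V) (a b : V) :
    (whiskered G Wv).Adj (Sum.inl a) (Sum.inr b) ↔ a = b ∧ a ∈ Wv := by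
  simp only [whiskered, fromRel_adj]
  constructor
  · rintro ⟨hne, (⟨x, y, hxy, h1, h2⟩ | ⟨x, hx, h1, h2⟩) | (⟨x, y, hxy, h1, h2⟩ | ⟨x, hx, h1, h2⟩)⟩ <;>
      simp_all [SimpleGraph.adj_comm]
  · rintro ⟨rfl, h⟩
    exact ⟨by simp, Or.inl (Or.inr ⟨a, h, rfl, rfl⟩)⟩

private lemma wadj_inr_nbr {V : Type*} (G : SimpleGraph V) (Wv : Set V) (w : V) (y : V ⊕ V) :
    (whiskered G Wv).Adj (Sum.inr w) y → y = Sum.inl w := by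
  simp only [whiskered, fromRel_adj]
  rintro ⟨hne, (⟨x, y', hxy, h1, h2⟩ | ⟨x, hx, h1, h2⟩) | (⟨x, y', hxy, h1, h2⟩ | ⟨x, hx, h1, h2⟩)⟩ <;>
    simp_all

/-- if `G` is a connected accessible graph, `B` a block of `G` with
cut-vertex set `C` and branch decomposition `G = B ∪ ⋃_{w ∈ C} G_w`, then for every
`W ⊆ C` the graph `B̄^W` (replace the branches at the vertices of `W` by whiskers)
is accessible; in particular `B̄ = B̄^C` is accessible. -/
theorem accessible_block_whiskers {V : Type u} [Fintype V] [DecidableEq V]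
    (G : SimpleGraph V) (B : Set V) (Gi : V → Set V) (C : Set V)
    (hconn : G.Connected) (hacc : AccessibleOn G Set.univ) (hB : IsBlock G B)
    (hC : C = {w | w ∈ B ∧ CutVertexOn G Set.univ w})
    (hcover : B ∪ ⋃ w ∈ C, Gi w = Set.univ)
    (hmeet : ∀ w ∈ C, Gi w ∩ B = {w})
    (hdisj : ∀ w ∈ C, ∀ w' ∈ C, w ≠ w' → Gi w ∩ Gi w' = ∅)
    (hedge : ∀ a b : V, G.Adj a b → (a ∈ B ∧ b ∈ B) ∨ ∃ w ∈ C, a ∈ Gi w ∧ b ∈ Gi w)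
    (hbranch : ∀ w ∈ C, (G.induce (Gi w \ {w})).Connected)
    (W : Set V) (hW : W ⊆ C) :
    AccessibleOn (whiskered G W)
      (Sum.inl '' (B ∪ ⋃ w ∈ C \ W, Gi w) ∪ Sum.inr '' W) := by
  classical
  set D : Set V := B ∪ ⋃ w ∈ C \ W, Gi w with hDdef
  set A : Set (V ⊕ V) := Sum.inl '' D ∪ Sum.inr '' W with hAdef
  have hCB : C ⊆ B := by intro w hw; rw [hC] at hw; exact hw.1
  have hBD : B ⊆ D := Set.subset_union_left
  have hWD : W ⊆ D := fun w hw => hBD (hCB (hW hw))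
  have memA_inl : ∀ {v : V}, Sum.inl v ∈ A ↔ v ∈ D := by
    intro v
    constructor
    · rintro (⟨u, hu, he⟩ | ⟨u, hu, he⟩)
      · cases Sum.inl_injective he; exact hu
      · simp at he
    · intro hv; exact Or.inl ⟨v, hv, rfl⟩
  have memA_inr : ∀ {v : V}, Sum.inr v ∈ A ↔ v ∈ W := by
    intro v
    constructor
    · rintro (⟨u, hu, he⟩ | ⟨u, hu, he⟩)
      · simp at he
      · cases Sum.inr_injective he; exact hu
    · intro hv; exact Or.inr ⟨v, hv, rfl⟩
  have fact1 : ∀ w ∈ W, ∀ v ∈ Gi w, v ≠ w → v ∉ D := by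
    intro w hw v hv hne hD
    rcases hD with hB | hU
    · have : v ∈ Gi w ∩ B := ⟨hv, hB⟩
      rw [hmeet w (hW hw)] at this
      exact hne this
    · simp only [Set.mem_iUnion] at hU
      obtain ⟨w', hw', hvw'⟩ := hU
      have hne' : w ≠ w' := fun h => hw'.2 (h ▸ hw)
      have : v ∈ Gi w ∩ Gi w' := ⟨hv, hvw'⟩
      rw [hdisj w (hW hw) w' hw'.1 hne'] at this
      exact this
  have fact2 : ∀ v : V, v ∉ D → ∃ w ∈ W, v ∈ Gi w := by
    intro v hv
    have hvu : v ∈ B ∪ ⋃ w ∈ C, Gi w := hcover ▸ Set.mem_univ v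
    rcases hvu with hB | hU
    · exact absurd (hBD hB) hv
    · simp only [Set.mem_iUnion] at hU
      obtain ⟨w, hwC, hvw⟩ := hU
      by_cases hwW : w ∈ W
      · exact ⟨w, hwW, hvw⟩
      · exact absurd (Or.inr (Set.mem_biUnion (show w ∈ C \ W from ⟨hwC, hwW⟩) hvw)) hv
  have uniqW : ∀ {w w' : V}, w ∈ C → w' ∈ C → ∀ {v : V}, v ∈ Gi w → v ∈ Gi w' → w = w' := by
    intro w w' hw hw' v hv hv'
    by_contra hne
    have : v ∈ Gi w ∩ Gi w' := ⟨hv, hv'⟩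
    rw [hdisj w hw w' hw' hne] at this
    exact this
  have hbrNE : ∀ w ∈ C, (Gi w \ {w}).Nonempty := by
    intro w hw
    have := (hbranch w hw).nonempty
    obtain ⟨⟨v, hv⟩⟩ := this
    exact ⟨v, hv⟩
  -- choice functions
  set bwF : V → V := fun v => if h : ∃ w ∈ W, v ∈ Gi w then h.choose else v with hbwFdef
  have hbwF : ∀ v : V, v ∉ D → bwF v ∈ W ∧ v ∈ Gi (bwF v) := by
    intro v hv
    have h : ∃ w ∈ W, v ∈ Gi w := fact2 v hv
    simp only [hbwFdef, dif_pos h]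
    exact h.choose_spec
  set uwF : V → V := fun w => if h : (Gi w \ {w}).Nonempty then h.choose else w with huwFdef
  have huwF : ∀ w ∈ C, uwF w ∈ Gi w \ {w} := by
    intro w hw
    have h : (Gi w \ {w}).Nonempty := hbrNE w hw
    simp only [huwFdef, dif_pos h]
    exact h.choose_spec
  have hadjz : ∀ w ∈ C, ∃ z, z ∈ Gi w \ {w} ∧ G.Adj w z := by
    intro w hw
    obtain ⟨u, hu⟩ := hbrNE w hw
    have hr : G.Reachable u w := hconn.preconnected u w
    obtain ⟨p⟩ := hr
    obtain ⟨c, d, hc, hd, hcd⟩ := exists_crossing p hu (by simp)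
    have hcB : c ∉ B := by
      intro hcB
      have : c ∈ Gi w ∩ B := ⟨hc.1, hcB⟩
      rw [hmeet w hw] at this
      exact hc.2 this
    rcases hedge c d hcd with ⟨h1, _⟩ | ⟨w', hw', hcw', hdw'⟩
    · exact absurd h1 hcB
    · have hww' : w' = w := uniqW hw' hw hcw' hc.1
      have hdw : d = w := by
        by_contra hne
        exact hd ⟨hww' ▸ hdw', hne⟩
      exact ⟨c, hc, (hdw ▸ hcd).symm⟩
  have hsubbr : ∀ w ∈ W, ∀ (S : Finset V), ↑S ⊆ D → Gi w \ {w} ⊆ Set.univ \ (↑S : Set V) := by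
    intro w hw S hS v hv
    exact ⟨trivial, fun hvS => fact1 w hw v hv.1 hv.2 (hS hvS)⟩
  -- THE KEY COUNTING LEMMA
  have star : ∀ S : Finset V, ↑S ⊆ D →
      cComp (whiskered G W) (A \ (Sum.inl '' ↑S)) = cComp G (Set.univ \ ↑S) := by
    intro S hS
    have memd1 : ∀ {v : V}, v ∈ D → v ∉ S → Sum.inl v ∈ A \ (Sum.inl '' ↑S) := by
      intro v hv hvs
      refine ⟨memA_inl.mpr hv, ?_⟩
      rintro ⟨u, hu, he⟩
      cases Sum.inl_injective he
      exact hvs hu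
    have memd2 : ∀ {w : V}, w ∈ W → Sum.inr w ∈ A \ (Sum.inl '' ↑S) := by
      intro w hw
      exact ⟨memA_inr.mpr hw, by rintro ⟨u, hu, he⟩; simp at he⟩
    have gmem : ∀ u : ↥(A \ Sum.inl '' (↑S : Set V)),
        Sum.elim id uwF u.1 ∈ Set.univ \ (↑S : Set V) := by
      rintro ⟨(v | w), hu⟩
      · refine ⟨trivial, fun hvS => hu.2 ⟨v, hvS, rfl⟩⟩
      · have hwW : w ∈ W := memA_inr.mp hu.1
        have huw := huwF w (hW hwW)
        exact hsubbr w hwW S hS huw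
    have reqv : ∀ {x y : ↥(A \ Sum.inl '' (↑S : Set V))},
        (x : V ⊕ V) = (y : V ⊕ V) →
        ((whiskered G W).induce (A \ Sum.inl '' ↑S)).Reachable x y := by
      intro x y h
      cases Subtype.ext h
      exact Reachable.refl _
    refine (card_cc_eq
      (G := G.induce (Set.univ \ (↑S : Set V)))
      (H := (whiskered G W).induce (A \ Sum.inl '' ↑S))
      (fun v => if h : v.1 ∈ D then ⟨Sum.inl v.1, memd1 h v.2.2⟩
        else ⟨Sum.inr (bwF v.1), memd2 (hbwF v.1 h).1⟩)
      (fun u => ⟨Sum.elim id uwF u.1, gmem u⟩)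
      ?_ ?_ ?_ ?_).symm
    · -- hf
      rintro ⟨a, ha⟩ ⟨b, hb⟩ hab
      have hGab : G.Adj a b := hab
      rcases hedge a b hGab with ⟨haB, hbB⟩ | ⟨w, hwC, haG, hbG⟩
      · have haD : a ∈ D := hBD haB
        have hbD : b ∈ D := hBD hbB
        simp only [dif_pos haD, dif_pos hbD]
        exact Adj.reachable ((wadj_inl G W a b).mpr hGab)
      · by_cases hwW : w ∈ W
        · by_cases haw : a = w
          · subst haw
            have hbw : b ≠ a := hGab.ne'
            have hbD : b ∉ D := fact1 a hwW b hbG hbw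
            have haD : a ∈ D := hWD hwW
            simp only [dif_pos haD, dif_neg hbD]
            have hbwa : bwF b = a := uniqW (hW (hbwF b hbD).1) hwC (hbwF b hbD).2 hbG
            refine Adj.reachable ?_
            show (whiskered G W).Adj (Sum.inl a) (Sum.inr (bwF b))
            rw [hbwa]
            exact (wadj_mix G W a a).mpr ⟨rfl, hwW⟩
          · by_cases hbw : b = w
            · subst hbw
              have haD : a ∉ D := fact1 b hwW a haG haw
              have hbD : b ∈ D := hWD hwW
              simp only [dif_neg haD, dif_pos hbD]
              have hbwa : bwF a = b := uniqW (hW (hbwF a haD).1) hwC (hbwF a haD).2 haG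
              refine Adj.reachable ?_
              show (whiskered G W).Adj (Sum.inr (bwF a)) (Sum.inl b)
              rw [hbwa]
              exact ((wadj_mix G W b b).mpr ⟨rfl, hwW⟩).symm
            · have haD : a ∉ D := fact1 w hwW a haG haw
              have hbD : b ∉ D := fact1 w hwW b hbG hbw
              simp only [dif_neg haD, dif_neg hbD]
              have e1 : bwF a = w := uniqW (hW (hbwF a haD).1) hwC (hbwF a haD).2 haG
              have e2 : bwF b = w := uniqW (hW (hbwF b hbD).1) hwC (hbwF b hbD).2 hbG
              exact reqv (by simp [e1, e2])
        · have hwCW : w ∈ C \ W := ⟨hwC, hwW⟩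
          have haD : a ∈ D := Or.inr (Set.mem_biUnion hwCW haG)
          have hbD : b ∈ D := Or.inr (Set.mem_biUnion hwCW hbG)
          simp only [dif_pos haD, dif_pos hbD]
          exact Adj.reachable ((wadj_inl G W a b).mpr hGab)
    · -- hg
      rintro ⟨(v | w), hu⟩ ⟨(v' | w'), hu'⟩ hab
      · have : G.Adj v v' := (wadj_inl G W v v').mp hab
        exact Adj.reachable this
      · obtain ⟨rfl, hvW⟩ := (wadj_mix G W v w').mp hab
        obtain ⟨z, hz, hwz⟩ := hadjz v (hW hvW)
        have hzS : z ∈ Set.univ \ (↑S : Set V) := hsubbr v hvW S hS hz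
        have hvS : v ∈ Set.univ \ (↑S : Set V) := ⟨trivial, fun h => hu.2 ⟨v, h, rfl⟩⟩
        have step : (G.induce (Set.univ \ (↑S : Set V))).Adj ⟨v, hvS⟩ ⟨z, hzS⟩ := hwz
        have huwv := huwF v (hW hvW)
        have hr : (G.induce (Gi v \ {v})).Reachable ⟨z, hz⟩ ⟨uwF v, huwv⟩ :=
          (hbranch v (hW hvW)).preconnected _ _
        have hr2 := reach_mono (hsubbr v hvW S hS) hz huwv hr
        exact step.reachable.trans hr2
      · obtain ⟨rfl, hvW⟩ := (wadj_mix G W v' w).mp hab.symm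
        obtain ⟨z, hz, hwz⟩ := hadjz v' (hW hvW)
        have hzS : z ∈ Set.univ \ (↑S : Set V) := hsubbr v' hvW S hS hz
        have hvS : v' ∈ Set.univ \ (↑S : Set V) := ⟨trivial, fun h => hu'.2 ⟨v', h, rfl⟩⟩
        have step : (G.induce (Set.univ \ (↑S : Set V))).Adj ⟨v', hvS⟩ ⟨z, hzS⟩ := hwz
        have huwv := huwF v' (hW hvW)
        have hr : (G.induce (Gi v' \ {v'})).Reachable ⟨z, hz⟩ ⟨uwF v', huwv⟩ :=
          (hbranch v' (hW hvW)).preconnected _ _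
        have hr2 := reach_mono (hsubbr v' hvW S hS) hz huwv hr
        exact (step.reachable.trans hr2).symm
      · exact absurd hab (by
          intro h
          have := wadj_inr_nbr G W w (Sum.inr w') h
          simp at this)
    · -- hgf
      rintro ⟨v, hv⟩
      by_cases h : v ∈ D
      · simp only [dif_pos h]
        exact Reachable.refl _
      · simp only [dif_neg h]
        have hspec := hbwF v h
        have hvne : v ≠ bwF v := fun he => h (he ▸ hWD hspec.1)
        have hvmem : v ∈ Gi (bwF v) \ {bwF v} := ⟨hspec.2, hvne⟩
        have huwm := huwF (bwF v) (hW hspec.1)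
        have hr : (G.induce (Gi (bwF v) \ {bwF v})).Reachable ⟨uwF (bwF v), huwm⟩ ⟨v, hvmem⟩ :=
          (hbranch (bwF v) (hW hspec.1)).preconnected _ _
        exact reach_mono (hsubbr (bwF v) hspec.1 S hS) huwm hvmem hr
    · -- hfg
      rintro ⟨(v | w), hu⟩
      · have hvD : v ∈ D := memA_inl.mp hu.1
        simp only [Sum.elim_inl, id_eq, dif_pos hvD]
        refine reqv ?_
        exact congrArg Subtype.val (dif_pos hvD)
      · have hwW : w ∈ W := memA_inr.mp hu.1
        have huwm := huwF w (hW hwW)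
        have hnD : uwF w ∉ D := fact1 w hwW (uwF w) huwm.1 huwm.2
        simp only [Sum.elim_inr, dif_neg hnD]
        have hspec := hbwF (uwF w) hnD
        have he : bwF (uwF w) = w := uniqW (hW hspec.1) (hW hwW) hspec.2 huwm.1
        refine reqv ?_
        exact (congrArg Subtype.val (dif_neg hnD)).trans (congrArg Sum.inr he)
  have starA : cComp (whiskered G W) A = cComp G Set.univ := by
    have := star ∅ (by simp)
    simpa using this
  -- cutsets contain no whisker vertices
  have noInr : ∀ T : Finset (V ⊕ V), CutsetOn (whiskered G W) A T →
      ∀ t ∈ T, ∃ v, t = Sum.inl v ∧ v ∈ D := by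
    intro T hT t ht
    obtain ⟨hmem, hlt⟩ := hT.2 t ht
    cases t with
    | inl v => exact ⟨v, rfl, memA_inl.mp hmem.1⟩
    | inr w =>
      exfalso
      have hle := cComp_del_pendant_le (whiskered G W) (A \ ↑(T.erase (Sum.inr w)))
        (Sum.inr w) (Sum.inl w) (fun y _ hadj => wadj_inr_nbr G W w y hadj)
      omega
  -- transfer of cutsets
  have cutIff : ∀ S : Finset V, ↑S ⊆ D →
      (CutsetOn (whiskered G W) A (S.image Sum.inl) ↔ CutsetOn G Set.univ S) := by
    intro S hSD
    have key : ∀ v ∈ S,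
        (CutVertexOn (whiskered G W)
            (A \ ↑((S.image (Sum.inl : V → V ⊕ V)).erase (Sum.inl v))) (Sum.inl v)
          ↔ CutVertexOn G (Set.univ \ ↑(S.erase v)) v) := by
      intro v hvS
      have hsub : (↑(S.erase v) : Set V) ⊆ D := fun u hu => hSD (Finset.erase_subset v S hu)
      have e_er : ((S.image (Sum.inl : V → V ⊕ V)).erase (Sum.inl v))
          = (S.erase v).image Sum.inl := (Finset.image_erase Sum.inl_injective S v).symm
      have e_dd : (A \ Sum.inl '' ↑(S.erase v)) \ {Sum.inl v} = A \ Sum.inl '' ↑S :=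
        diff_erase_diff_img _ A S v hvS
      have e_ddG : (Set.univ \ (↑(S.erase v) : Set V)) \ {v} = Set.univ \ ↑S :=
        diff_erase_diff _ S v hvS
      have s1 := star (S.erase v) hsub
      have s2 := star S hSD
      rw [CutVertexOn, CutVertexOn, e_er, Finset.coe_image]
      have hiff : (cComp (whiskered G W) (A \ Sum.inl '' ↑(S.erase v)) <
          cComp (whiskered G W) ((A \ Sum.inl '' ↑(S.erase v)) \ {Sum.inl v})) ↔
          (cComp G (Set.univ \ ↑(S.erase v)) < cComp G ((Set.univ \ ↑(S.erase v)) \ {v})) := by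
        rw [e_dd, e_ddG, s1, s2]
      constructor
      · rintro ⟨-, hlt⟩
        exact ⟨⟨trivial, by simp⟩, hiff.mp hlt⟩
      · rintro ⟨-, hlt⟩
        refine ⟨⟨memA_inl.mpr (hSD hvS), ?_⟩, hiff.mpr hlt⟩
        rintro ⟨u, hu, he⟩
        cases Sum.inl_injective he
        exact (Finset.notMem_erase v S) hu
    constructor
    · rintro ⟨h1, h2⟩
      refine ⟨fun u _ => Set.mem_univ u, fun v hvS => ?_⟩
      exact (key v hvS).mp (h2 (Sum.inl v) (Finset.mem_image_of_mem _ hvS))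
    · rintro ⟨h1, h2⟩
      refine ⟨?_, ?_⟩
      · intro t ht
        rw [Finset.mem_coe, Finset.mem_image] at ht
        obtain ⟨v, hv, rfl⟩ := ht
        exact memA_inl.mpr (hSD hv)
      · intro t ht
        rw [Finset.mem_image] at ht
        obtain ⟨v, hvS, rfl⟩ := ht
        exact (key v hvS).mpr (h2 v hvS)
  have repT : ∀ T : Finset (V ⊕ V), CutsetOn (whiskered G W) A T →
      ∃ S : Finset V, T = S.image Sum.inl ∧ ↑S ⊆ D := by
    intro T hT
    refine ⟨T.preimage Sum.inl Sum.inl_injective.injOn, ?_, ?_⟩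
    · ext t
      simp only [Finset.mem_image, Finset.mem_preimage]
      constructor
      · intro ht
        obtain ⟨v, rfl, hv⟩ := noInr T hT t ht
        exact ⟨v, ht, rfl⟩
      · rintro ⟨v, hv, rfl⟩
        exact hv
    · intro v hv
      rw [Finset.mem_coe, Finset.mem_preimage] at hv
      obtain ⟨u, he, hu⟩ := noInr T hT _ hv
      cases Sum.inl_injective he
      exact hu
  refine ⟨?_, ?_⟩
  · intro T hT
    obtain ⟨S, rfl, hSD'⟩ := repT T hT
    have hcut : CutsetOn G Set.univ S := (cutIff S hSD').mp hT
    have h1 := hacc.1 S hcut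
    rw [Finset.coe_image, star S hSD', starA,
      Finset.card_image_of_injective S Sum.inl_injective, h1]
  · intro T hT hne
    obtain ⟨S, rfl, hSD'⟩ := repT T hT
    have hcut : CutsetOn G Set.univ S := (cutIff S hSD').mp hT
    have hSne : S.Nonempty := by
      obtain ⟨t, ht⟩ := hne
      rw [Finset.mem_image] at ht
      obtain ⟨v, hv, -⟩ := ht
      exact ⟨v, hv⟩
    obtain ⟨v, hvS, hvcut⟩ := hacc.2 S hcut hSne
    refine ⟨Sum.inl v, Finset.mem_image_of_mem _ hvS, ?_⟩
    rw [← Finset.image_erase Sum.inl_injective]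
    exact (cutIff (S.erase v) (fun u hu => hSD' (Finset.erase_subset v S hu))).mpr hvcut
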